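/- arXiv:1103.6271 — 2 statements merged into one kernel-verified Lean document; each statement's English description precedes it below -/
import Mathlib

section
/- Let f(x) = sin(x)(1 - 1/(8 sin(x/2)^3)) on (0, 2π) and let θ_c be its unique critical point in (0, π). Suppose 0 < t₁ᴸ < t₂ᴸ < θ_c < t₂ᴿ < t₁ᴿ < 2π with f(t₁ᴸ) = f(t₁ᴿ) and f(t₂ᴸ) = f(t₂ᴿ). Then t₂ᴸ + t₂ᴿ < t₁ᴸ + t₁ᴿ. -/
open Real Set Filter Topology

noncomputable def f (x : ℝ) : ℝ := Real.sin x * (1 - 1 / (8 * (Real.sin (x/2))^3))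

noncomputable def f1 (x : ℝ) : ℝ :=
  Real.cos x + (1 + Real.cos (x/2)^2) / (8 * Real.sin (x/2)^3)

noncomputable def f2 (x : ℝ) : ℝ :=
  -Real.sin x - Real.cos (x/2) * (5 + Real.cos (x/2)^2) / (16 * Real.sin (x/2)^4)

noncomputable def f3 (x : ℝ) : ℝ :=
  -Real.cos x + (Real.sin (x/2)^2 * (5 + 3*Real.cos (x/2)^2)
      + 4*Real.cos (x/2)^2 * (5 + Real.cos (x/2)^2)) / (32 * Real.sin (x/2)^5)

lemma sin_half_pos {x : ℝ} (hx : x ∈ Ioo (0:ℝ) (2*π)) : 0 < Real.sin (x/2) := by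
  apply Real.sin_pos_of_pos_of_lt_pi <;> [linarith [hx.1]; linarith [hx.2]]

lemma sin_x_eq (x : ℝ) : Real.sin x = 2 * Real.sin (x/2) * Real.cos (x/2) := by
  have : x = 2 * (x/2) := by ring
  rw [this, Real.sin_two_mul]; ring_nf

lemma cos_x_eq (x : ℝ) : Real.cos x = 1 - 2 * Real.sin (x/2)^2 := by
  have h : Real.cos (2 * (x/2)) = 1 - 2 * Real.sin (x/2)^2 := by
    rw [Real.cos_two_mul' (x/2)]; linarith [Real.sin_sq_add_cos_sq (x/2)]
  calc Real.cos x = Real.cos (2*(x/2)) := by ring_nf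
    _ = 1 - 2 * Real.sin (x/2)^2 := h

lemma pyth (x : ℝ) : Real.sin (x/2)^2 + Real.cos (x/2)^2 = 1 := Real.sin_sq_add_cos_sq _

lemma hasDerivAt_f {x : ℝ} (hx : x ∈ Ioo (0:ℝ) (2*π)) : HasDerivAt f (f1 x) x := by
  have hs := sin_half_pos hx
  have hs' : Real.sin (x/2) ≠ 0 := ne_of_gt hs
  have hd : (8 * Real.sin (x/2)^3) ≠ 0 := by positivity
  have h1 : HasDerivAt (fun y : ℝ => Real.sin (y/2)) (Real.cos (x/2) * (1/2)) x := by
    simpa [Function.comp_def] using (Real.hasDerivAt_sin (x/2)).comp x ((hasDerivAt_id x).div_const 2)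
  have h2 : HasDerivAt (fun y : ℝ => 8 * Real.sin (y/2)^3)
      (8 * (3 * Real.sin (x/2)^2 * (Real.cos (x/2) * (1/2)))) x := by
    exact ((h1.pow 3).const_mul 8)
  have h3 : HasDerivAt (fun y : ℝ => 1 - 1 / (8 * Real.sin (y/2)^3))
      (0 - (0 * (8 * Real.sin (x/2)^3) - 1 * (8 * (3 * Real.sin (x/2)^2 * (Real.cos (x/2) * (1/2)))))
        / (8 * Real.sin (x/2)^3)^2) x := by
    exact (hasDerivAt_const x (1:ℝ)).sub ((hasDerivAt_const x (1:ℝ)).div h2 hd)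
  have h4 : HasDerivAt f (Real.cos x * (1 - 1 / (8 * Real.sin (x/2)^3)) +
      Real.sin x * (0 - (0 * (8 * Real.sin (x/2)^3) - 1 * (8 * (3 * Real.sin (x/2)^2 * (Real.cos (x/2) * (1/2)))))
        / (8 * Real.sin (x/2)^3)^2)) x := (Real.hasDerivAt_sin x).mul h3
  convert h4 using 1
  rw [f1, sin_x_eq x, cos_x_eq x]
  have p := pyth x
  field_simp
  linear_combination (-2) * p

lemma hasDerivAt_f1 {x : ℝ} (hx : x ∈ Ioo (0:ℝ) (2*π)) : HasDerivAt f1 (f2 x) x := by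
  have hs := sin_half_pos hx
  have hs' : Real.sin (x/2) ≠ 0 := ne_of_gt hs
  have hd : (8 * Real.sin (x/2)^3) ≠ 0 := by positivity
  have hsin : HasDerivAt (fun y : ℝ => Real.sin (y/2)) (Real.cos (x/2) * (1/2)) x := by
    simpa [Function.comp_def] using (Real.hasDerivAt_sin (x/2)).comp x ((hasDerivAt_id x).div_const 2)
  have hcos : HasDerivAt (fun y : ℝ => Real.cos (y/2)) (-Real.sin (x/2) * (1/2)) x := by
    simpa [Function.comp_def] using (Real.hasDerivAt_cos (x/2)).comp x ((hasDerivAt_id x).div_const 2)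
  have hN : HasDerivAt (fun y : ℝ => 1 + Real.cos (y/2)^2)
      (0 + 2 * Real.cos (x/2) ^ 1 * (-Real.sin (x/2) * (1/2))) x :=
    (hasDerivAt_const x (1:ℝ)).add (hcos.pow 2)
  have hD : HasDerivAt (fun y : ℝ => 8 * Real.sin (y/2)^3)
      (8 * (3 * Real.sin (x/2)^2 * (Real.cos (x/2) * (1/2)))) x := (hsin.pow 3).const_mul 8
  have h4 : HasDerivAt f1 (-Real.sin x +
      ((0 + 2 * Real.cos (x/2) ^ 1 * (-Real.sin (x/2) * (1/2))) * (8 * Real.sin (x/2)^3)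
        - (1 + Real.cos (x/2)^2) * (8 * (3 * Real.sin (x/2)^2 * (Real.cos (x/2) * (1/2)))))
        / (8 * Real.sin (x/2)^3)^2) x := (Real.hasDerivAt_cos x).add (hN.div hD hd)
  convert h4 using 1
  rw [f2]
  have p := pyth x
  field_simp
  linear_combination (32 * Real.cos (x/2)) * p

lemma hasDerivAt_f2 {x : ℝ} (hx : x ∈ Ioo (0:ℝ) (2*π)) : HasDerivAt f2 (f3 x) x := by
  have hs := sin_half_pos hx
  have hs' : Real.sin (x/2) ≠ 0 := ne_of_gt hs
  have hd : (16 * Real.sin (x/2)^4) ≠ 0 := by positivity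
  have hsin : HasDerivAt (fun y : ℝ => Real.sin (y/2)) (Real.cos (x/2) * (1/2)) x := by
    simpa [Function.comp_def] using (Real.hasDerivAt_sin (x/2)).comp x ((hasDerivAt_id x).div_const 2)
  have hcos : HasDerivAt (fun y : ℝ => Real.cos (y/2)) (-Real.sin (x/2) * (1/2)) x := by
    simpa [Function.comp_def] using (Real.hasDerivAt_cos (x/2)).comp x ((hasDerivAt_id x).div_const 2)
  have hM : HasDerivAt (fun y : ℝ => Real.cos (y/2) * (5 + Real.cos (y/2)^2))
      ((-Real.sin (x/2) * (1/2)) * (5 + Real.cos (x/2)^2)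
        + Real.cos (x/2) * (0 + 2 * Real.cos (x/2) ^ 1 * (-Real.sin (x/2) * (1/2)))) x :=
    hcos.mul ((hasDerivAt_const x (5:ℝ)).add (hcos.pow 2))
  have hD : HasDerivAt (fun y : ℝ => 16 * Real.sin (y/2)^4)
      (16 * (4 * Real.sin (x/2)^3 * (Real.cos (x/2) * (1/2)))) x := (hsin.pow 4).const_mul 16
  have h4 : HasDerivAt f2 (-Real.cos x -
      (((-Real.sin (x/2) * (1/2)) * (5 + Real.cos (x/2)^2)
        + Real.cos (x/2) * (0 + 2 * Real.cos (x/2) ^ 1 * (-Real.sin (x/2) * (1/2)))) * (16 * Real.sin (x/2)^4)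
        - (Real.cos (x/2) * (5 + Real.cos (x/2)^2)) * (16 * (4 * Real.sin (x/2)^3 * (Real.cos (x/2) * (1/2)))))
        / (16 * Real.sin (x/2)^4)^2) x := ((Real.hasDerivAt_sin x).neg).sub (hM.div hD hd)
  convert h4 using 1
  rw [f3]
  have p := pyth x
  field_simp
  linear_combination (0 * Real.sin (x/2)) * p

lemma f3_pos {x : ℝ} (hx : x ∈ Ioo (0:ℝ) (2*π)) : 0 < f3 x := by
  have hs := sin_half_pos hx
  set s := Real.sin (x/2) with hsdef
  have hs1 : s ≤ 1 := Real.sin_le_one _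
  have hc2 : Real.cos (x/2)^2 = 1 - s^2 := by
    have := pyth x; linarith
  have h5 : (0:ℝ) < 32 * s^5 := by positivity
  rw [f3, cos_x_eq, hc2, ← hsdef]
  have hnum : 0 < 64*s^7 - 32*s^5 + s^4 - 20*s^2 + 24 := by
    rcases le_or_gt (s^2) (1/2) with h | h
    · nlinarith [pow_pos hs 4, pow_pos hs 5, mul_le_of_le_one_left (pow_pos hs 4).le hs1]
    · nlinarith [pow_pos hs 5, pow_pos hs 7]
  have heq : -(1 - 2*s^2) + (s^2 * (5 + 3*(1 - s^2)) + 4*(1 - s^2) * (5 + (1 - s^2)))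
      / (32 * s^5) = (64*s^7 - 32*s^5 + s^4 - 20*s^2 + 24) / (32 * s^5) := by
    field_simp; ring
  rw [heq]
  exact div_pos hnum h5

lemma Ioo_open : IsOpen (Ioo (0:ℝ) (2*π)) := isOpen_Ioo

lemma deriv_f_eq {x : ℝ} (hx : x ∈ Ioo (0:ℝ) (2*π)) : deriv f x = f1 x :=
  (hasDerivAt_f hx).deriv

lemma contOn_f : ContinuousOn f (Ioo (0:ℝ) (2*π)) :=
  fun x hx => ((hasDerivAt_f hx).continuousAt).continuousWithinAt

lemma contOn_f1 : ContinuousOn f1 (Ioo (0:ℝ) (2*π)) :=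
  fun x hx => ((hasDerivAt_f1 hx).continuousAt).continuousWithinAt

lemma contOn_f2 : ContinuousOn f2 (Ioo (0:ℝ) (2*π)) :=
  fun x hx => ((hasDerivAt_f2 hx).continuousAt).continuousWithinAt

lemma f2_strictMono : StrictMonoOn f2 (Ioo (0:ℝ) (2*π)) := by
  apply strictMonoOn_of_deriv_pos (convex_Ioo _ _) contOn_f2
  intro x hx
  rw [interior_Ioo] at hx
  rw [(hasDerivAt_f2 hx).deriv]
  exact f3_pos hx

/-- tangent line lemma: for a < x, f1 a > f1 x + f2 x * (a - x). -/
lemma tangent_lt {a x : ℝ} (ha : a ∈ Ioo (0:ℝ) (2*π)) (hx : x ∈ Ioo (0:ℝ) (2*π))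
    (hax : a < x) : f1 x + f2 x * (a - x) < f1 a := by
  have hsub : Icc a x ⊆ Ioo (0:ℝ) (2*π) := Icc_subset_Ioo ha.1 hx.2
  obtain ⟨ξ, hξ, hmv⟩ := exists_hasDerivAt_eq_slope f1 f2 hax
    (contOn_f1.mono hsub) (fun y hy => hasDerivAt_f1 (hsub (Ioo_subset_Icc_self hy)))
  have hξ2 : f2 ξ < f2 x := f2_strictMono (hsub (Ioo_subset_Icc_self hξ)) hx hξ.2
  have hxa : x - a ≠ 0 := sub_ne_zero.mpr (ne_of_gt hax)
  rw [eq_div_iff hxa] at hmv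
  nlinarith [hξ.2, hax]

/-- key inequality: if a < b and f a ≤ f b then f1 a + f1 b > 0 -/
lemma key_ineq {a b : ℝ} (ha : a ∈ Ioo (0:ℝ) (2*π)) (hb : b ∈ Ioo (0:ℝ) (2*π))
    (hab : a < b) (hfab : f a ≤ f b) : 0 < f1 a + f1 b := by
  -- ψ(x) = f x - f a - (x - a) * (f1 a + f1 x) / 2 is strictly decreasing on [a, b]
  set ψ : ℝ → ℝ := fun x => f x - f a - (x - a) * (f1 a + f1 x) / 2 with hψ
  have hsub : Icc a b ⊆ Ioo (0:ℝ) (2*π) := Icc_subset_Ioo ha.1 hb.2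
  have hderiv : ∀ x ∈ Ioo a b, HasDerivAt ψ
      ((f1 x - (f1 a + f1 x) / 2 - (x - a) * f2 x / 2)) x := by
    intro x hx
    have hx' := hsub (Ioo_subset_Icc_self hx)
    have h1 := hasDerivAt_f hx'
    have h2 := hasDerivAt_f1 hx'
    have : HasDerivAt (fun y => f y - f a - (y - a) * (f1 a + f1 y) / 2)
        (f1 x - 0 - ((1 - 0) * (f1 a + f1 x) + (x - a) * (0 + f2 x)) / 2) x := by
      exact ((h1.sub (hasDerivAt_const x (f a))).sub
        ((((hasDerivAt_id x).sub (hasDerivAt_const x a)).mul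
          ((hasDerivAt_const x (f1 a)).add h2)).div_const 2))
    convert this using 1; ring
  have hneg : ∀ x ∈ Ioo a b, f1 x - (f1 a + f1 x) / 2 - (x - a) * f2 x / 2 < 0 := by
    intro x hx
    have hx' := hsub (Ioo_subset_Icc_self hx)
    have ht := tangent_lt ha hx' hx.1
    nlinarith [ht]
  have hcont : ContinuousOn ψ (Icc a b) := by
    apply ContinuousOn.sub
    apply ContinuousOn.sub
    · exact contOn_f.mono hsub
    · exact continuousOn_const
    · exact (ContinuousOn.mul (by fun_prop) (ContinuousOn.add continuousOn_const
        (contOn_f1.mono hsub))).div_const 2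
  have hanti : StrictAntiOn ψ (Icc a b) := by
    apply strictAntiOn_of_deriv_neg (convex_Icc _ _) hcont
    intro x hx
    rw [interior_Icc] at hx
    rw [(hderiv x hx).deriv]
    exact hneg x hx
  have := hanti (left_mem_Icc.mpr hab.le) (right_mem_Icc.mpr hab.le) hab
  have hψa : ψ a = 0 := by simp [hψ]
  rw [hψa] at this
  have : f b - f a - (b - a) * (f1 a + f1 b) / 2 < 0 := this
  nlinarith [hab]

lemma f1_pos_small {x : ℝ} (h0 : 0 < x) (h1 : x < 1) : 0 < f1 x := by
  have hπ := Real.pi_gt_three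
  have hs : 0 < Real.sin (x/2) :=
    Real.sin_pos_of_pos_of_lt_pi (by linarith) (by linarith)
  have hslt : Real.sin (x/2) < x/2 := Real.sin_lt (by linarith)
  have hden : 0 < 8 * Real.sin (x/2)^3 := by positivity
  have h8 : 8 * Real.sin (x/2)^3 < 1 := by
    have hp : Real.sin (x/2)^3 < (x/2)^3 := by
      apply pow_lt_pow_left₀ hslt hs.le (by norm_num)
    have hx3 : x^3 < 1 := pow_lt_one₀ h0.le h1 (by norm_num)
    nlinarith
  have e1 : 1 < 1 / (8 * Real.sin (x/2)^3) := by
    rw [lt_div_iff₀ hden]; linarith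
  have e2 : 1 / (8 * Real.sin (x/2)^3) ≤ (1 + Real.cos (x/2)^2) / (8 * Real.sin (x/2)^3) := by
    gcongr
    nlinarith [sq_nonneg (Real.cos (x/2))]
  rw [f1]
  linarith [Real.neg_one_le_cos x]

lemma f1_pi : f1 π = -(7/8) := by
  have h : (π)/2 = π/2 := rfl
  rw [f1]
  rw [Real.cos_pi, Real.sin_pi_div_two, Real.cos_pi_div_two]
  norm_num

section Signs

variable {θc : ℝ} (hθc : θc ∈ Ioo (0:ℝ) π)
  (huniq : ∀ θ ∈ Ioo (0:ℝ) π, deriv f θ = 0 → θ = θc)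

include hθc huniq

lemma f1_pos_left {y : ℝ} (hy : y ∈ Ioo (0:ℝ) θc) : 0 < f1 y := by
  have hπ := Real.pi_gt_three
  have hθπ := hθc.2
  by_contra h
  push_neg at h
  set x0 := min y 1 / 2 with hx0
  have hx0pos : 0 < x0 := by
    have := lt_min hy.1 one_pos; positivity
  have hx0y : x0 < y := by
    have : min y 1 ≤ y := min_le_left _ _
    have := hy.1; simp only [hx0]; linarith
  have hx0lt1 : x0 < 1 := by
    have : min y 1 ≤ 1 := min_le_right _ _
    simp only [hx0]; linarith
  have hpos := f1_pos_small hx0pos hx0lt1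
  have hsub : Icc x0 y ⊆ Ioo (0:ℝ) (2*π) := fun z hz =>
    ⟨lt_of_lt_of_le hx0pos hz.1, by have := hz.2; have := hy.2; linarith⟩
  obtain ⟨z, hz, hfz⟩ := intermediate_value_Icc' hx0y.le (contOn_f1.mono hsub)
    (show (0:ℝ) ∈ Icc (f1 y) (f1 x0) from ⟨h, hpos.le⟩)
  have hz0 : deriv f z = 0 := by
    rw [deriv_f_eq (hsub hz), hfz]
  have := huniq z ⟨lt_of_lt_of_le hx0pos hz.1, by have := hz.2; have := hy.2; linarith⟩ hz0
  have := hz.2; have := hy.2; linarith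

lemma f1_neg_right {y : ℝ} (hy : y ∈ Ioc θc π) : f1 y < 0 := by
  have hπ := Real.pi_gt_three
  have hθ0 := hθc.1
  by_contra h
  push_neg at h
  rcases eq_or_lt_of_le hy.2 with hyπ | hyπ
  · rw [hyπ, f1_pi] at h; norm_num at h
  have hsub : Icc y π ⊆ Ioo (0:ℝ) (2*π) := fun z hz =>
    ⟨by have := hz.1; have := hy.1; linarith, by have := hz.2; linarith⟩
  obtain ⟨z, hz, hfz⟩ := intermediate_value_Icc' hyπ.le (contOn_f1.mono hsub)
    (show (0:ℝ) ∈ Icc (f1 π) (f1 y) from ⟨by rw [f1_pi]; norm_num, h⟩)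
  have hzπ : z ≠ π := by
    intro hzz; rw [hzz, f1_pi] at hfz; norm_num at hfz
  have hz0 : deriv f z = 0 := by rw [deriv_f_eq (hsub hz), hfz]
  have := huniq z ⟨by have := hz.1; have := hy.1; linarith,
    lt_of_le_of_ne hz.2 hzπ⟩ hz0
  have := hz.1; have := hy.1; linarith

omit hθc huniq in
lemma f1_symm (x : ℝ) : f1 (2*π - x) = f1 x := by
  rw [f1, f1, Real.cos_two_pi_sub, show (2*π - x)/2 = π - x/2 by ring,
    Real.sin_pi_sub, Real.cos_pi_sub]
  ring

lemma f1_neg_mid {y : ℝ} (hy : y ∈ Ioo θc (2*π - θc)) : f1 y < 0 := by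
  rcases le_or_gt y π with hyπ | hyπ
  · exact f1_neg_right hθc huniq ⟨hy.1, hyπ⟩
  · have : f1 y = f1 (2*π - y) := by
      rw [← f1_symm (2*π - y)]; norm_num
    rw [this]
    exact f1_neg_right hθc huniq ⟨by have := hy.2; linarith, by linarith⟩

lemma f1_pos_far {y : ℝ} (hy : y ∈ Ioo (2*π - θc) (2*π)) : 0 < f1 y := by
  have : f1 y = f1 (2*π - y) := by
    rw [← f1_symm (2*π - y)]; norm_num
  rw [this]
  exact f1_pos_left hθc huniq ⟨by have := hy.2; linarith, by have := hy.1; linarith⟩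

lemma f_mono_left : StrictMonoOn f (Ioc (0:ℝ) θc) := by
  have hπ := Real.pi_gt_three
  apply strictMonoOn_of_deriv_pos (convex_Ioc _ _)
  · exact contOn_f.mono (fun z hz => ⟨hz.1, by have := hz.2; have := hθc.2; linarith⟩)
  · intro x hx
    rw [interior_Ioc] at hx
    rw [deriv_f_eq ⟨hx.1, by have := hx.2; have := hθc.2; linarith⟩]
    exact f1_pos_left hθc huniq hx

lemma f_anti_mid : StrictAntiOn f (Icc θc (2*π - θc)) := by
  have hπ := Real.pi_gt_three
  apply strictAntiOn_of_deriv_neg (convex_Icc _ _)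
  · exact contOn_f.mono (fun z hz => ⟨by have := hz.1; have := hθc.1; linarith,
      by have := hz.2; have := hθc.1; linarith⟩)
  · intro x hx
    rw [interior_Icc] at hx
    rw [deriv_f_eq ⟨by have := hx.1; have := hθc.1; linarith,
      by have := hx.2; have := hθc.1; linarith⟩]
    exact f1_neg_mid hθc huniq hx

lemma f_mono_far : StrictMonoOn f (Ico (2*π - θc) (2*π)) := by
  have hπ := Real.pi_gt_three
  apply strictMonoOn_of_deriv_pos (convex_Ico _ _)
  · exact contOn_f.mono (fun z hz => ⟨by have := hz.1; have := hθc.2; linarith, hz.2⟩)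
  · intro x hx
    rw [interior_Ico] at hx
    rw [deriv_f_eq ⟨by have := hx.1; have := hθc.2; linarith, hx.2⟩]
    exact f1_pos_far hθc huniq hx

end Signs

section Core

variable {θc : ℝ} (hθc : θc ∈ Ioo (0:ℝ) π)
  (huniq : ∀ θ ∈ Ioo (0:ℝ) π, deriv f θ = 0 → θ = θc)

include hθc huniq

lemma core {a1 a2 b1 b2 : ℝ} (ha1 : 0 < a1) (h12 : a1 < a2) (ha2 : a2 < θc)
    (hb1 : θc < b1) (hb1' : b1 ≤ 2*π - θc)
    (hb2 : θc < b2) (hb2' : b2 ≤ 2*π - θc)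
    (hfa1 : f a1 = f b1) (hfa2 : f a2 = f b2) :
    a2 + b2 < a1 + b1 := by
  have hπ := Real.pi_gt_three
  have hθ0 := hθc.1
  have hθπ := hθc.2
  -- f a1 < f a2
  have hfa12 : f a1 < f a2 :=
    f_mono_left hθc huniq ⟨ha1, by linarith⟩ ⟨by linarith, ha2.le⟩ h12
  -- b2 < b1
  have hb21 : b2 < b1 := by
    by_contra hle
    push_neg at hle
    have := (f_anti_mid hθc huniq).antitoneOn ⟨hb1.le, hb1'⟩ ⟨hb2.le, hb2'⟩ hle
    rw [← hfa1, ← hfa2] at this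
    linarith
  by_contra hcon
  push_neg at hcon
  set c := a2 + b2 with hc
  have hcb1 : a1 ≤ c - b1 := by simp only [hc]; linarith
  have hI1 : c - b1 < a2 := by simp only [hc]; linarith
  -- membership facts
  have hmemL : ∀ x ∈ Icc (c - b1) a2, x ∈ Ioo (0:ℝ) (2*π) :=
    fun x hx => ⟨by have := hx.1; linarith, by have := hx.2; linarith⟩
  have hmemR : ∀ x ∈ Icc (c - b1) a2, c - x ∈ Ioo (0:ℝ) (2*π) := by
    intro x hx
    constructor
    · have := hx.2; simp only [hc]; linarith
    · have := hx.1; linarith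
  set g : ℝ → ℝ := fun x => f x - f (c - x) with hg
  have hg_cont : ContinuousOn g (Icc (c - b1) a2) := by
    apply ContinuousOn.sub
    · exact contOn_f.mono (fun x hx => hmemL x hx)
    · exact ContinuousOn.comp contOn_f (by fun_prop) (fun x hx => hmemR x hx)
  -- derivative of g
  have hg_deriv : ∀ x ∈ Icc (c - b1) a2, HasDerivAt g (f1 x + f1 (c - x)) x := by
    intro x hx
    have h1 := hasDerivAt_f (hmemL x hx)
    have h2 : HasDerivAt (fun y : ℝ => f (c - y)) (f1 (c - x) * (0 - 1)) x :=
      (hasDerivAt_f (hmemR x hx)).comp x ((hasDerivAt_const x c).sub (hasDerivAt_id x))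
    have := h1.sub h2
    exact this.congr_deriv (by ring)
  -- endpoint values
  have hgl : 0 ≤ g (c - b1) := by
    have h1 : f a1 ≤ f (c - b1) := by
      rcases eq_or_lt_of_le hcb1 with h | h
      · rw [h]
      · exact (f_mono_left hθc huniq ⟨ha1, by linarith⟩
          ⟨by linarith, by linarith⟩ h).le
    have : c - (c - b1) = b1 := by ring
    simp only [hg, this]
    rw [← hfa1]; linarith
  have hgr : g a2 = 0 := by
    have : c - a2 = b2 := by simp only [hc]; ring
    simp only [hg, this]
    rw [hfa2]; ring
  -- auxiliary: no min point in (c-b1, a2]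
  have haux : ∀ ξ ∈ Icc (c - b1) a2, IsMinOn g (Icc (c - b1) a2) ξ →
      c - b1 < ξ → False := by
    intro ξ hξ hmin hξl
    have hgξ : g ξ ≤ 0 := by
      rw [← hgr]; exact hmin (right_mem_Icc.mpr (by linarith))
    have hfξ : f ξ ≤ f (c - ξ) := by simpa [hg] using hgξ
    have hξlt : ξ < c - ξ := by
      have h1 := hξ.2
      simp only [hc]
      linarith
    have hd0 : 0 < f1 ξ + f1 (c - ξ) :=
      key_ineq (hmemL ξ hξ) (hmemR ξ hξ) hξlt hfξ
    -- derivative positive at a min reachable from the left: contradiction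
    have hg' := hg_deriv ξ hξ
    have hslope := hasDerivAt_iff_tendsto_slope.mp hg'
    have hev : ∀ᶠ x in 𝓝[≠] ξ, 0 < slope g ξ x :=
      hslope.eventually (lt_mem_nhds hd0)
    have hmono : 𝓝[<] ξ ≤ 𝓝[≠] ξ :=
      nhdsWithin_mono ξ (fun y hy => ne_of_lt hy)
    have hev' : ∀ᶠ x in 𝓝[<] ξ, 0 < slope g ξ x := hev.filter_mono hmono
    have hIoo : Ioo (c - b1) ξ ∈ 𝓝[<] ξ :=
      Ioo_mem_nhdsLT_of_mem ⟨hξl, le_refl _⟩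
    obtain ⟨x, hx1, hx2⟩ := (hev'.and (eventually_of_mem hIoo (fun y hy => hy))).exists
    -- x < ξ with slope > 0 implies g x < g ξ, contradicting the min
    have hxξ : x < ξ := hx2.2
    have : g x < g ξ := by
      rw [slope_def_field] at hx1
      have hneg : x - ξ < 0 := by linarith
      by_contra hge
      push_neg at hge
      have : (g x - g ξ) / (x - ξ) ≤ 0 :=
        div_nonpos_of_nonneg_of_nonpos (by linarith) hneg.le
      linarith
    have : g ξ ≤ g x := hmin ⟨hx2.1.le, by linarith [hξ.2]⟩
    linarith
  -- get a min point
  obtain ⟨ξ, hξI, hmin⟩ := isCompact_Icc.exists_isMinOn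
    (nonempty_Icc.mpr (by linarith)) hg_cont
  rcases eq_or_lt_of_le hξI.1 with heq | hlt
  · -- min at left endpoint: then a2 is also a min point
    have hmin2 : IsMinOn g (Icc (c - b1) a2) a2 := by
      intro x hx
      have h1 : g ξ ≤ g x := hmin hx
      have h2 : 0 ≤ g ξ := by rw [heq] at hgl; exact hgl
      simp only [Set.mem_setOf_eq, hgr]
      linarith
    exact haux a2 (right_mem_Icc.mpr (by linarith)) hmin2 hI1
  · exact haux ξ hξI hmin hlt

end Core

theorem stmt6 (θc : ℝ) (hθc : θc ∈ Ioo (0:ℝ) π) (hcrit : deriv f θc = 0)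
    (huniq : ∀ θ ∈ Ioo (0:ℝ) π, deriv f θ = 0 → θ = θc)
    (t1L t1R t2L t2R : ℝ)
    (h1 : 0 < t1L) (h2 : t1L < t2L) (h3 : t2L < θc) (h4 : θc < t2R)
    (h5 : t2R < t1R) (h6 : t1R < 2*π)
    (hf1 : f t1L = f t1R) (hf2 : f t2L = f t2R) :
    t2L + t2R < t1L + t1R := by
  have hπ := Real.pi_gt_three
  have hθ0 := hθc.1
  have hθπ := hθc.2
  -- f t1L < f t2L
  have hfLL : f t1L < f t2L :=
    f_mono_left hθc huniq ⟨h1, by linarith⟩ ⟨by linarith, h3.le⟩ h2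
  -- Step 1 : t2R < 2π - θc
  have hstep1 : t2R < 2*π - θc := by
    by_contra hge
    push_neg at hge
    have : f t2R < f t1R :=
      f_mono_far hθc huniq ⟨hge, by linarith⟩ ⟨by linarith, h6⟩ h5
    rw [← hf1, ← hf2] at this
    linarith
  rcases lt_or_ge t1R (2*π - θc) with hcase | hcase
  · -- both inner: apply core directly
    exact core hθc huniq h1 h2 h3 (by linarith) (by linarith) h4 hstep1.le hf1 hf2
  · -- t1R beyond the right minimum 2π - θc
    have hfm : f (2*π - θc) ≤ f t1R := by
      rcases eq_or_lt_of_le hcase with h | h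
      · rw [h]
      · exact (f_mono_far hθc huniq ⟨le_refl _, by linarith⟩ ⟨hcase, h6⟩ h).le
    have hfθc : f t1L < f θc :=
      f_mono_left hθc huniq ⟨h1, by linarith⟩ ⟨hθ0, le_refl _⟩ (by linarith)
    -- find the inner match b1 of t1L
    have hsub : Icc θc (2*π - θc) ⊆ Ioo (0:ℝ) (2*π) :=
      fun z hz => ⟨by have := hz.1; linarith, by have := hz.2; linarith⟩
    obtain ⟨b1, hb1mem, hb1eq⟩ := intermediate_value_Icc' (by linarith
      : θc ≤ 2*π - θc) (contOn_f.mono hsub)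
      (show f t1L ∈ Icc (f (2*π - θc)) (f θc) from ⟨by rw [hf1]; exact hfm, hfθc.le⟩)
    have hb1θc : θc < b1 := by
      rcases eq_or_lt_of_le hb1mem.1 with h | h
      · rw [← h] at hb1eq; rw [hb1eq] at hfθc; linarith
      · exact h
    have hmain := core hθc huniq h1 h2 h3 hb1θc hb1mem.2 h4 hstep1.le hb1eq.symm hf2
    have := hb1mem.2
    linarith
end

section
/- Let f(x) = sin(x)(1 - 1/(8 sin(x/2)^3)). Suppose θ₃', θ₂, θ₁ > 0 satisfy f(θ₃') = 0, f(θ₃' + θ₂) = 0, f(θ₃' + θ₂ + θ₁) = 0, and θ₃' + θ₂ + θ₁ < 2π. Then θ₃' = π/3, θ₂ = 2π/3, and θ₁ = 2π/3. -/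
open Real Set

lemma sin_eq_half (t : ℝ) (h0 : 0 < t) (h1 : t < π) (hs : Real.sin t = 1/2) :
    t = π/6 ∨ t = 5*π/6 := by
  have hpi := Real.pi_pos
  rcases le_or_gt t (π/2) with hle | hgt
  · left
    have := Real.injOn_sin (Set.mem_Icc.mpr ⟨by linarith, hle⟩)
      (Set.mem_Icc.mpr ⟨by linarith, by linarith⟩)
      (by rw [hs, Real.sin_pi_div_six] : Real.sin t = Real.sin (π/6))
    linarith [this]
  · right
    have hsu : Real.sin (π - t) = 1/2 := by rw [Real.sin_pi_sub, hs]
    have := Real.injOn_sin (Set.mem_Icc.mpr ⟨by linarith, by linarith⟩)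
      (Set.mem_Icc.mpr ⟨by linarith, by linarith⟩)
      (by rw [hsu, Real.sin_pi_div_six] : Real.sin (π - t) = Real.sin (π/6))
    linarith [this]

lemma zeros_of_f (x : ℝ) (h0 : 0 < x) (h2 : x < 2*π) (hf : f x = 0) :
    x = π/3 ∨ x = π ∨ x = 5*π/3 := by
  have hpi := Real.pi_pos
  have hs : 0 < Real.sin (x/2) :=
    Real.sin_pos_of_pos_of_lt_pi (by linarith) (by linarith)
  unfold f at hf
  rcases mul_eq_zero.mp hf with hz | hz
  · -- sin x = 0, so x = π
    right; left
    obtain ⟨n, hn⟩ := Real.sin_eq_zero_iff.mp hz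
    have hn0 : (0:ℝ) < (n:ℝ) := by nlinarith
    have hn2 : (n:ℝ) < 2 := by nlinarith
    have : (0:ℤ) < n := by exact_mod_cast hn0
    have : n < 2 := by exact_mod_cast hn2
    have hn1 : n = 1 := by omega
    rw [hn1] at hn; push_cast at hn; linarith
  · -- 1 - 1/(8 s^3) = 0
    set s := Real.sin (x/2) with hsdef
    have hs3 : (0:ℝ) < 8 * s^3 := by positivity
    have hcube : 8 * s^3 = 1 := by
      field_simp at hz
      linarith
    have hseq : s = 1/2 := by
      have hfac : (s - 1/2) * ((s + 1/4)^2 + 3/16) = 0 := by nlinarith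
      have hpos : (0:ℝ) < (s + 1/4)^2 + 3/16 := by positivity
      have := mul_eq_zero.mp hfac
      rcases this with h | h
      · linarith
      · linarith
    have := sin_eq_half (x/2) (by linarith) (by linarith) hseq
    rcases this with h | h
    · left; linarith
    · right; right; linarith

set_option maxHeartbeats 1000000 in
theorem stmt9 (θ₃' θ₂ θ₁ : ℝ) (h3 : 0 < θ₃') (h2 : 0 < θ₂) (h1 : 0 < θ₁)
    (hsum : θ₃' + θ₂ + θ₁ < 2*π)
    (hf1 : f θ₃' = 0) (hf2 : f (θ₃' + θ₂) = 0) (hf3 : f (θ₃' + θ₂ + θ₁) = 0) :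
    θ₃' = π/3 ∧ θ₂ = 2*π/3 ∧ θ₁ = 2*π/3 := by
  have hpi := Real.pi_pos
  have ha := zeros_of_f θ₃' h3 (by linarith) hf1
  have hb := zeros_of_f (θ₃' + θ₂) (by linarith) (by linarith) hf2
  have hc := zeros_of_f (θ₃' + θ₂ + θ₁) (by linarith) (by linarith) hf3
  rcases ha with ha|ha|ha <;> rcases hb with hb|hb|hb <;> rcases hc with hc|hc|hc <;>
    exact ⟨by linarith, by linarith, by linarith⟩
end
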